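/- Let P be an invertible n×n complex matrix and let A, B be n×n complex matrices such that A P = P B and Pᴴ A = B Pᴴ. Then U = (P Pᴴ)^{-1/2} P is a unitary matrix satisfying A U = U B. -/

import Mathlib

open Matrix
open scoped ComplexOrder

/-- The positive semidefinite square root of a positive semidefinite matrix
(the definition `Matrix.PosSemidef.sqrt` of the older Mathlib, since removed). -/
noncomputable def Matrix.PosSemidef.sqrt {n 𝕜 : Type*} [Fintype n] [RCLike 𝕜] [DecidableEq n]
    {A : Matrix n n 𝕜} (hA : A.PosSemidef) : Matrix n n 𝕜 :=
  hA.1.eigenvectorUnitary.1 * diagonal ((↑) ∘ (Real.sqrt ·) ∘ hA.1.eigenvalues) *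
    (star hA.1.eigenvectorUnitary : Matrix n n 𝕜)

lemma Matrix.PosSemidef.sqrt_mul_self {n : ℕ} {A : Matrix (Fin n) (Fin n) ℂ}
    (hA : A.PosSemidef) : hA.sqrt * hA.sqrt = A := by
  have hU : (star hA.1.eigenvectorUnitary : Matrix (Fin n) (Fin n) ℂ) *
      hA.1.eigenvectorUnitary.1 = 1 := Matrix.mem_unitaryGroup_iff'.mp hA.1.eigenvectorUnitary.2
  have hD : diagonal (((↑) ∘ (Real.sqrt ·) ∘ hA.1.eigenvalues : Fin n → ℂ)) *
      diagonal ((↑) ∘ (Real.sqrt ·) ∘ hA.1.eigenvalues) =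
      diagonal (RCLike.ofReal ∘ hA.1.eigenvalues) := by
    rw [diagonal_mul_diagonal]
    congr 1
    funext i
    simp only [Function.comp]
    rw [← Complex.ofReal_mul, Real.mul_self_sqrt (hA.eigenvalues_nonneg i)]
    rfl
  conv_rhs => rw [hA.1.spectral_theorem, Unitary.conjStarAlgAut_apply]
  unfold Matrix.PosSemidef.sqrt
  rw [← hD]
  calc _ = hA.1.eigenvectorUnitary.1 * diagonal (((↑) ∘ (Real.sqrt ·) ∘ hA.1.eigenvalues : Fin n → ℂ)) *
        ((star hA.1.eigenvectorUnitary : Matrix (Fin n) (Fin n) ℂ) * hA.1.eigenvectorUnitary.1) *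
        diagonal ((↑) ∘ (Real.sqrt ·) ∘ hA.1.eigenvalues) *
        (star hA.1.eigenvectorUnitary : Matrix (Fin n) (Fin n) ℂ) := by
          simp only [Matrix.mul_assoc]; rfl
    _ = _ := by rw [hU, Matrix.mul_one]; simp only [Matrix.mul_assoc]

lemma Matrix.PosSemidef.posSemidef_sqrt {n : ℕ} {A : Matrix (Fin n) (Fin n) ℂ}
    (hA : A.PosSemidef) : hA.sqrt.PosSemidef := by
  unfold Matrix.PosSemidef.sqrt
  have hd : (diagonal (((↑) ∘ (Real.sqrt ·) ∘ hA.1.eigenvalues : Fin n → ℂ))).PosSemidef := by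
    rw [posSemidef_diagonal_iff]
    intro i
    simp only [Function.comp]
    exact_mod_cast Real.sqrt_nonneg _
  have := hd.mul_mul_conjTranspose_same (hA.1.eigenvectorUnitary.1)
  rwa [← Matrix.star_eq_conjTranspose] at this

/-- Conjugation by a unitary matrix as an algebra homomorphism. -/
noncomputable def conjByUnitary {n : ℕ} (U : Matrix.unitaryGroup (Fin n) ℂ) :
    Matrix (Fin n) (Fin n) ℂ →ₐ[ℂ] Matrix (Fin n) (Fin n) ℂ where
  toFun x := (U : Matrix (Fin n) (Fin n) ℂ) * x * (star U : Matrix (Fin n) (Fin n) ℂ)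
  map_one' := by
    simpa only [mul_one] using Matrix.mem_unitaryGroup_iff.mp U.2
  map_mul' x y := by
    have h : (star U : Matrix (Fin n) (Fin n) ℂ) * (U : Matrix (Fin n) (Fin n) ℂ) = 1 :=
      Matrix.mem_unitaryGroup_iff'.mp U.2
    calc (U : Matrix (Fin n) (Fin n) ℂ) * (x * y) * (star U : Matrix (Fin n) (Fin n) ℂ)
        = (U : Matrix (Fin n) (Fin n) ℂ) * x *
            ((star U : Matrix (Fin n) (Fin n) ℂ) * (U : Matrix (Fin n) (Fin n) ℂ)) * y *
            (star U : Matrix (Fin n) (Fin n) ℂ) := by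
          rw [h]; noncomm_ring
      _ = _ := by noncomm_ring
  map_zero' := by simp
  map_add' x y := by noncomm_ring
  commutes' r := by
    have h : (U : Matrix (Fin n) (Fin n) ℂ) * (star U : Matrix (Fin n) (Fin n) ℂ) = 1 :=
      Matrix.mem_unitaryGroup_iff.mp U.2
    simp only [Algebra.algebraMap_eq_smul_one, mul_smul_comm, smul_mul_assoc, mul_one, h]

/-- Anything commuting with a positive semidefinite matrix commutes with its square root. -/
lemma commute_sqrt {n : ℕ} {M A : Matrix (Fin n) (Fin n) ℂ} (hM : M.PosSemidef)
    (h : A * M = M * A) : A * hM.sqrt = hM.sqrt * A := by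
  classical
  set d : Fin n → ℂ := fun i => (hM.1.eigenvalues i : ℂ) with hd
  set s : Finset ℂ := Finset.image d Finset.univ with hs
  set f : ℂ → ℂ := fun z => (Real.sqrt z.re : ℂ) with hf
  set p : Polynomial ℂ := Lagrange.interpolate s id f with hp
  have hinj : Set.InjOn (id : ℂ → ℂ) s := Function.injective_id.injOn
  have hev : ∀ i, p.eval (d i) = (Real.sqrt (hM.1.eigenvalues i) : ℂ) := by
    intro i
    have hmem : d i ∈ s := Finset.mem_image_of_mem d (Finset.mem_univ i)
    have := Lagrange.eval_interpolate_at_node f hinj hmem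
    simp only [id] at this
    rw [hp, this, hf]
    simp [hd]
  -- the square root is a polynomial in M
  have hsqrt : Polynomial.aeval M p = hM.sqrt := by
    have hMeq : M = conjByUnitary hM.1.eigenvectorUnitary (Matrix.diagonal d) :=
      hM.1.spectral_theorem
    have key : Polynomial.aeval M p
        = conjByUnitary hM.1.eigenvectorUnitary (Polynomial.aeval (Matrix.diagonal d) p) := by
      have h2 := Polynomial.aeval_algHom_apply
        (conjByUnitary hM.1.eigenvectorUnitary) (Matrix.diagonal d) p
      rw [← hMeq] at h2
      exact h2
    have hdiag : Polynomial.aeval (Matrix.diagonal d) p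
        = Matrix.diagonal (fun i => (Real.sqrt (hM.1.eigenvalues i) : ℂ)) := by
      have := Polynomial.aeval_algHom_apply (Matrix.diagonalAlgHom (n := Fin n) ℂ) d p
      simp only [Matrix.diagonalAlgHom_apply] at this
      have harg : (Polynomial.aeval d p : Fin n → ℂ)
          = fun i => (Real.sqrt (hM.1.eigenvalues i) : ℂ) := by
        funext i
        have h3 := Polynomial.aeval_algHom_apply (Pi.evalAlgHom ℂ (fun _ : Fin n => ℂ) i) d p
        calc (Polynomial.aeval d p) i = Polynomial.aeval (d i) p := h3.symm
          _ = p.eval (d i) := by rw [Polynomial.coe_aeval_eq_eval]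
          _ = _ := hev i
      rw [this, harg]
    rw [key, hdiag]
    rfl
  have hcomm : Commute A (Polynomial.aeval M p) := by
    induction p using Polynomial.induction_on' with
    | add q r hq hr => rw [map_add]; exact hq.add_right hr
    | monomial k c =>
      rw [Polynomial.aeval_monomial]
      exact (Algebra.commute_algebraMap_right c A).mul_right (Commute.pow_right h k)
  rw [← hsqrt]
  exact hcomm

theorem unitary_part_intertwines (n : ℕ) (P A B : Matrix (Fin n) (Fin n) ℂ)
    (hP : IsUnit P) (h1 : A * P = P * B) (h2 : Pᴴ * A = B * Pᴴ) :
    let U := ((Matrix.posSemidef_self_mul_conjTranspose P).sqrt)⁻¹ * P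
    U * Uᴴ = 1 ∧ A * U = U * B := by
  intro U
  set hPP := Matrix.posSemidef_self_mul_conjTranspose P with hPPdef
  set S := hPP.sqrt with hSdef
  have hSS : S * S = P * Pᴴ := hPP.sqrt_mul_self
  have hSH : Sᴴ = S := hPP.posSemidef_sqrt.1
  have hPu : IsUnit P.det := hP.map detMonoidHom
  have hPPu : IsUnit (P * Pᴴ).det := by
    rw [det_mul, det_conjTranspose]
    exact hPu.mul hPu.star
  have hSu : IsUnit S.det := by
    have : IsUnit (S.det * S.det) := by rw [← det_mul, hSS]; exact hPPu
    exact isUnit_of_mul_isUnit_left this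
  have hSinv : S⁻¹ * S = 1 := nonsing_inv_mul S hSu
  have hSinv' : S * S⁻¹ = 1 := mul_nonsing_inv S hSu
  constructor
  · have : Uᴴ = Pᴴ * S⁻¹ := by
      rw [conjTranspose_mul, conjTranspose_nonsing_inv, hSH]
    rw [this]
    calc S⁻¹ * P * (Pᴴ * S⁻¹) = S⁻¹ * (P * Pᴴ) * S⁻¹ := by noncomm_ring
      _ = S⁻¹ * (S * S) * S⁻¹ := by rw [hSS]
      _ = (S⁻¹ * S) * (S * S⁻¹) := by noncomm_ring
      _ = 1 := by rw [hSinv, hSinv', one_mul]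
  · have hcM : A * (P * Pᴴ) = (P * Pᴴ) * A := by
      calc A * (P * Pᴴ) = (A * P) * Pᴴ := by rw [mul_assoc]
        _ = P * (B * Pᴴ) := by rw [h1, mul_assoc]
        _ = P * (Pᴴ * A) := by rw [h2]
        _ = (P * Pᴴ) * A := by rw [mul_assoc]
    have hcS : A * S = S * A := commute_sqrt hPP hcM
    have hcSinv : A * S⁻¹ = S⁻¹ * A := by
      calc A * S⁻¹ = S⁻¹ * S * A * S⁻¹ := by rw [hSinv, one_mul]
        _ = S⁻¹ * (S * A) * S⁻¹ := by noncomm_ring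
        _ = S⁻¹ * (A * S) * S⁻¹ := by rw [hcS]
        _ = S⁻¹ * A * (S * S⁻¹) := by noncomm_ring
        _ = S⁻¹ * A := by rw [hSinv', mul_one]
    calc A * (S⁻¹ * P) = (A * S⁻¹) * P := by rw [mul_assoc]
      _ = S⁻¹ * (A * P) := by rw [hcSinv, mul_assoc]
      _ = (S⁻¹ * P) * B := by rw [h1, mul_assoc]
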